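/- Let μ : P → ℝ be locally bounded and locally integrable, and suppose there is a monotonically decreasing function b : ℝ → ℝ such that μ(α,β) ≥ 0 whenever α ≥ b(β) and μ(α,β) ≤ 0 whenever α ≤ b(β). Fix a boundary point (α₁,β₁) with α₁ = b(β₁) and α₁ > β₁. Assume the divergence conditions: ∬_{{α₁<α<λ, β₁<β<α}} μ(α,β)(α−β) dα dβ → ∞ as λ → ∞, and ∬_{{λ<β<β₁, β<α<α₁}} (−μ(α,β))(α−β) dα dβ → ∞ as λ → −∞. Then there exist u_min ≤ β₁ and u_max ≥ α₁, with u_min = β₁ or u_max = α₁, such that ∬_{T(u_min,u_max)} μ(α,β)·(α − β) dα dβ = 0; i.e. the major hysteresis loop of the Preisach operator with weighting μ generated by a periodic input with minimum u_min and maximum u_max encloses zero signed area, so this Preisach operator is a butterfly hysteresis operator. -/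

import Mathlib

/-!
STATEMENT 6: A Preisach operator with a locally bounded, locally integrable
two-sided weighting function μ (sign boundary the graph of a monotonically
decreasing function b) satisfying the divergence of its first-order upper and
lower partial moments is a butterfly hysteresis operator: there is an input
range [u_min, u_max] containing [β₁, α₁], with u_min = β₁ or u_max = α₁, over
which the major loop encloses zero signed area.
-/

open MeasureTheory Filter

lemma aux_bound_on_compact (μ : ℝ × ℝ → ℝ)
    (h : ∀ p : ℝ × ℝ, ∃ U ∈ nhds p, ∃ M : ℝ, ∀ q ∈ U, |μ q| ≤ M)
    {K : Set (ℝ × ℝ)} (hK : IsCompact K) : ∃ M : ℝ, ∀ q ∈ K, |μ q| ≤ M := by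
  choose U hU M hM using h
  obtain ⟨t, -, ht⟩ := hK.elim_nhds_subcover U (fun p _ => hU p)
  refine ⟨∑ p ∈ t, |M p|, fun q hq => ?_⟩
  obtain ⟨p, hp, hqp⟩ := Set.mem_iUnion₂.mp (ht hq)
  calc |μ q| ≤ M p := hM p q hqp
    _ ≤ |M p| := le_abs_self _
    _ ≤ ∑ p ∈ t, |M p| := Finset.single_le_sum (f := fun p => |M p|) (fun i _ => abs_nonneg _) hp

lemma aux_continuousOn_of_lip {f : ℝ → ℝ} {s : Set ℝ} {L : ℝ}
    (h : ∀ x ∈ s, ∀ y ∈ s, x ≤ y → |f y - f x| ≤ L * (y - x)) :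
    ContinuousOn f s := by
  refine (LipschitzOnWith.of_dist_le_mul (K := L.toNNReal) ?_).continuousOn
  have key : ∀ x ∈ s, ∀ y ∈ s, x ≤ y → dist (f x) (f y) ≤ L.toNNReal * dist x y := by
    intro x hx y hy hxy
    rw [Real.dist_eq, Real.dist_eq, abs_sub_comm x y, abs_of_nonneg (by linarith : (0:ℝ) ≤ y - x),
      abs_sub_comm (f x) (f y)]
    calc |f y - f x| ≤ L * (y - x) := h x hx y hy hxy
      _ ≤ L.toNNReal * (y - x) :=
        mul_le_mul_of_nonneg_right (Real.le_coe_toNNReal L) (by linarith)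
  intro x hx y hy
  rcases le_total x y with hxy | hxy
  · exact key x hx y hy hxy
  · rw [dist_comm, dist_comm x y]; exact key y hy x hx hxy

lemma aux_abs_setIntegral_le {ν : ℝ × ℝ → ℝ} (hm : AEStronglyMeasurable ν volume)
    {D : Set (ℝ × ℝ)} {a c a' c' : ℝ} (ha : a ≤ c) (ha' : a' ≤ c')
    (hD : D ⊆ Set.Icc a c ×ˢ Set.Icc a' c')
    {C : ℝ} (hC0 : 0 ≤ C) (hC : ∀ p ∈ D, |ν p| ≤ C) :
    |∫ p in D, ν p| ≤ C * ((c - a) * (c' - a')) := by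
  have hvol : volume D ≤ ENNReal.ofReal ((c - a) * (c' - a')) := by
    calc volume D ≤ volume (Set.Icc a c ×ˢ Set.Icc a' c') := measure_mono hD
      _ = ENNReal.ofReal (c - a) * ENNReal.ofReal (c' - a') := by
        rw [Measure.volume_eq_prod, Measure.prod_prod, Real.volume_Icc, Real.volume_Icc]
      _ = ENNReal.ofReal ((c - a) * (c' - a')) :=
        (ENNReal.ofReal_mul (by linarith)).symm
  have hfin : volume D < ⊤ := lt_of_le_of_lt hvol ENNReal.ofReal_lt_top
  have h1 : ‖∫ p in D, ν p‖ ≤ C * (volume D).toReal :=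
    norm_setIntegral_le_of_norm_le_const hfin (fun p hp => hC p hp)
  rw [Real.norm_eq_abs] at h1
  refine h1.trans (mul_le_mul_of_nonneg_left ?_ hC0)
  exact ENNReal.toReal_le_of_le_ofReal (mul_nonneg (by linarith) (by linarith)) hvol


/-- The triangular subregion `T(b₀,a₀) = {(α,β) : b₀ ≤ β ≤ α ≤ a₀}` of the
Preisach plane (points are `p = (α, β)`). -/
def preisachTriangle (b₀ a₀ : ℝ) : Set (ℝ × ℝ) :=
  {p : ℝ × ℝ | b₀ ≤ p.2 ∧ p.2 ≤ p.1 ∧ p.1 ≤ a₀}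


lemma aux_measurable_triangle (b₀ a₀ : ℝ) : MeasurableSet (preisachTriangle b₀ a₀) := by
  have : preisachTriangle b₀ a₀
      = {p : ℝ × ℝ | b₀ ≤ p.2} ∩ ({p : ℝ × ℝ | p.2 ≤ p.1} ∩ {p : ℝ × ℝ | p.1 ≤ a₀}) := by
    ext p; simp [preisachTriangle, and_assoc]
  rw [this]
  exact (measurableSet_le measurable_const measurable_snd).inter
    ((measurableSet_le measurable_snd measurable_fst).inter
      (measurableSet_le measurable_fst measurable_const))

lemma aux_triangle_subset_box (b₀ a₀ : ℝ) :
    preisachTriangle b₀ a₀ ⊆ Set.Icc b₀ a₀ ×ˢ Set.Icc b₀ a₀ := by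
  rintro p ⟨h1, h2, h3⟩
  exact ⟨⟨h1.trans h2, h3⟩, ⟨h1, h2.trans h3⟩⟩


theorem two_sided_preisach_is_butterfly
    (μ : ℝ × ℝ → ℝ)
    (hlocbdd : ∀ p : ℝ × ℝ, ∃ U ∈ nhds p, ∃ M : ℝ, ∀ q ∈ U, |μ q| ≤ M)
    (hlocint : LocallyIntegrable μ volume)
    (b : ℝ → ℝ) (hb : ∀ β₁ β₂ : ℝ, β₁ ≤ β₂ → b β₂ ≤ b β₁)
    (hpos : ∀ α β : ℝ, β < α → b β ≤ α → 0 ≤ μ (α, β))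
    (hneg : ∀ α β : ℝ, β < α → α ≤ b β → μ (α, β) ≤ 0)
    (α₁ β₁ : ℝ) (hbd : α₁ = b β₁) (hP : β₁ < α₁)
    (hdivUp : Filter.Tendsto
      (fun lam : ℝ => ∫ p in {p : ℝ × ℝ |
          α₁ < p.1 ∧ p.1 < lam ∧ β₁ < p.2 ∧ p.2 < p.1},
        μ p * (p.1 - p.2)) Filter.atTop Filter.atTop)
    (hdivLow : Filter.Tendsto
      (fun lam : ℝ => ∫ p in {p : ℝ × ℝ |
          lam < p.2 ∧ p.2 < β₁ ∧ p.2 < p.1 ∧ p.1 < α₁},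
        (-μ p) * (p.1 - p.2)) Filter.atBot Filter.atTop) :
    ∃ umin umax : ℝ, umin ≤ β₁ ∧ α₁ ≤ umax ∧ (umin = β₁ ∨ umax = α₁) ∧
      (∫ p in preisachTriangle umin umax, μ p * (p.1 - p.2)) = 0 := by
  set ν : ℝ × ℝ → ℝ := fun p => μ p * (p.1 - p.2) with hν
  have hνm : AEStronglyMeasurable ν volume :=
    hlocint.aestronglyMeasurable.mul
      ((continuous_fst.sub continuous_snd).aestronglyMeasurable)
  -- integrability on boxes
  have hIntBox : ∀ a c : ℝ, IntegrableOn ν (Set.Icc a c ×ˢ Set.Icc a c) volume := by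
    intro a c
    have hK : IsCompact (Set.Icc a c ×ˢ Set.Icc a c) := isCompact_Icc.prod isCompact_Icc
    have hμK : IntegrableOn μ (Set.Icc a c ×ˢ Set.Icc a c) volume :=
      hlocint.integrableOn_isCompact hK
    have hbox : MeasurableSet (Set.Icc a c ×ˢ Set.Icc a c) :=
      measurableSet_Icc.prod measurableSet_Icc
    have hbd2 : ∀ᵐ p ∂(volume.restrict (Set.Icc a c ×ˢ Set.Icc a c)),
        ‖(p : ℝ × ℝ).1 - p.2‖ ≤ c - a := by
      filter_upwards [ae_restrict_mem hbox] with p hp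
      rw [Real.norm_eq_abs]
      rcases hp with ⟨⟨h1, h2⟩, ⟨h3, h4⟩⟩
      rw [abs_le]; constructor <;> linarith
    have := Integrable.bdd_mul hμK
      ((continuous_fst.sub continuous_snd).aestronglyMeasurable.restrict) hbd2
    exact this.congr (Filter.Eventually.of_forall (fun p => mul_comm _ _))
  have hIntT : ∀ b₀ a₀ : ℝ, IntegrableOn ν (preisachTriangle b₀ a₀) volume :=
    fun b₀ a₀ => (hIntBox b₀ a₀).mono_set (aux_triangle_subset_box b₀ a₀)
  set c : ℝ := ∫ p in preisachTriangle β₁ α₁, ν p with hc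
  -- upper strip
  set SU : ℝ → Set (ℝ × ℝ) :=
    fun lam => {p : ℝ × ℝ | β₁ ≤ p.2 ∧ p.2 ≤ p.1 ∧ p.1 ≤ lam ∧ α₁ < p.1} with hSU
  have hSUm : ∀ lam, MeasurableSet (SU lam) := by
    intro lam
    have : SU lam = {p : ℝ × ℝ | β₁ ≤ p.2} ∩ ({p : ℝ × ℝ | p.2 ≤ p.1}
        ∩ ({p : ℝ × ℝ | p.1 ≤ lam} ∩ {p : ℝ × ℝ | α₁ < p.1})) := by
      ext p; simp [hSU, and_assoc]
    rw [this]
    exact (measurableSet_le measurable_const measurable_snd).inter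
      ((measurableSet_le measurable_snd measurable_fst).inter
        ((measurableSet_le measurable_fst measurable_const).inter
          (measurableSet_lt measurable_const measurable_fst)))
  have hSUsub : ∀ lam, SU lam ⊆ preisachTriangle β₁ lam := by
    rintro lam p ⟨h1, h2, h3, h4⟩; exact ⟨h1, h2, h3⟩
  have hSUint : ∀ lam, IntegrableOn ν (SU lam) volume :=
    fun lam => (hIntT β₁ lam).mono_set (hSUsub lam)
  have hSUpos : ∀ lam, ∀ p ∈ SU lam, 0 ≤ ν p := by
    rintro lam p ⟨h1, h2, h3, h4⟩
    rcases eq_or_lt_of_le h2 with heq | hlt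
    · simp [hν, ← heq]
    · have hbβ : b p.2 ≤ p.1 := by
        have := hb β₁ p.2 h1
        rw [← hbd] at this
        linarith
      have := hpos p.1 p.2 hlt hbβ
      have hμp : 0 ≤ μ p := by rwa [Prod.mk.eta] at this
      exact mul_nonneg hμp (by linarith)
  have hsplitU : ∀ lam, α₁ ≤ lam →
      preisachTriangle β₁ lam = preisachTriangle β₁ α₁ ∪ SU lam := by
    intro lam hlam
    ext p
    simp only [preisachTriangle, hSU, Set.mem_setOf_eq, Set.mem_union]
    constructor
    · rintro ⟨h1, h2, h3⟩
      rcases le_or_gt p.1 α₁ with h | h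
      · exact Or.inl ⟨h1, h2, h⟩
      · exact Or.inr ⟨h1, h2, h3, h⟩
    · rintro (⟨h1, h2, h3⟩ | ⟨h1, h2, h3, h4⟩)
      · exact ⟨h1, h2, h3.trans hlam⟩
      · exact ⟨h1, h2, h3⟩
  have hdisjU : ∀ lam, Disjoint (preisachTriangle β₁ α₁) (SU lam) := by
    intro lam
    rw [Set.disjoint_left]
    rintro p ⟨h1, h2, h3⟩ ⟨g1, g2, g3, g4⟩
    exact absurd h3 (not_le.mpr g4)
  set F : ℝ → ℝ := fun lam => ∫ p in preisachTriangle β₁ lam, ν p with hF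
  have hFeq : ∀ lam, α₁ ≤ lam → F lam = c + ∫ p in SU lam, ν p := by
    intro lam hlam
    rw [hF]
    simp only
    rw [hsplitU lam hlam,
      setIntegral_union (hdisjU lam) (hSUm lam) (hIntT β₁ α₁) (hSUint lam)]
  -- lower bound via open region
  have hOpenU : ∀ lam : ℝ,
      {p : ℝ × ℝ | α₁ < p.1 ∧ p.1 < lam ∧ β₁ < p.2 ∧ p.2 < p.1} ⊆ SU lam := by
    rintro lam p ⟨h1, h2, h3, h4⟩
    exact ⟨h3.le, h4.le, h2.le, h1⟩
  have hFbound : ∀ lam, α₁ ≤ lam →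
      c + (∫ p in {p : ℝ × ℝ | α₁ < p.1 ∧ p.1 < lam ∧ β₁ < p.2 ∧ p.2 < p.1}, ν p)
        ≤ F lam := by
    intro lam hlam
    rw [hFeq lam hlam]
    have : (∫ p in {p : ℝ × ℝ | α₁ < p.1 ∧ p.1 < lam ∧ β₁ < p.2 ∧ p.2 < p.1}, ν p)
        ≤ ∫ p in SU lam, ν p := by
      refine setIntegral_mono_set (hSUint lam) ?_ ?_
      · filter_upwards [ae_restrict_mem (hSUm lam)] with p hp
        exact hSUpos lam p hp
      · exact (HasSubset.Subset.eventuallyLE (hOpenU lam))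
    linarith
  -- lower strip
  set SL : ℝ → Set (ℝ × ℝ) :=
    fun lam => {p : ℝ × ℝ | lam ≤ p.2 ∧ p.2 ≤ p.1 ∧ p.1 ≤ α₁ ∧ p.2 < β₁} with hSL
  have hSLm : ∀ lam, MeasurableSet (SL lam) := by
    intro lam
    have : SL lam = {p : ℝ × ℝ | lam ≤ p.2} ∩ ({p : ℝ × ℝ | p.2 ≤ p.1}
        ∩ ({p : ℝ × ℝ | p.1 ≤ α₁} ∩ {p : ℝ × ℝ | p.2 < β₁})) := by
      ext p; simp [hSL, and_assoc]
    rw [this]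
    exact (measurableSet_le measurable_const measurable_snd).inter
      ((measurableSet_le measurable_snd measurable_fst).inter
        ((measurableSet_le measurable_fst measurable_const).inter
          (measurableSet_lt measurable_snd measurable_const)))
  have hSLsub : ∀ lam, SL lam ⊆ preisachTriangle lam α₁ := by
    rintro lam p ⟨h1, h2, h3, h4⟩; exact ⟨h1, h2, h3⟩
  have hSLint : ∀ lam, IntegrableOn ν (SL lam) volume :=
    fun lam => (hIntT lam α₁).mono_set (hSLsub lam)
  have hSLneg : ∀ lam, ∀ p ∈ SL lam, 0 ≤ -ν p := by
    rintro lam p ⟨h1, h2, h3, h4⟩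
    rcases eq_or_lt_of_le h2 with heq | hlt
    · simp [hν, ← heq]
    · have hbβ : p.1 ≤ b p.2 := by
        have := hb p.2 β₁ h4.le
        rw [← hbd] at this
        linarith
      have := hneg p.1 p.2 hlt hbβ
      have hμp : μ p ≤ 0 := by rwa [Prod.mk.eta] at this
      have : ν p ≤ 0 := mul_nonpos_iff.mpr (Or.inr ⟨hμp, by linarith⟩)
      linarith
  have hsplitL : ∀ lam, lam ≤ β₁ →
      preisachTriangle lam α₁ = preisachTriangle β₁ α₁ ∪ SL lam := by
    intro lam hlam
    ext p
    simp only [preisachTriangle, hSL, Set.mem_setOf_eq, Set.mem_union]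
    constructor
    · rintro ⟨h1, h2, h3⟩
      rcases le_or_gt β₁ p.2 with h | h
      · exact Or.inl ⟨h, h2, h3⟩
      · exact Or.inr ⟨h1, h2, h3, h⟩
    · rintro (⟨h1, h2, h3⟩ | ⟨h1, h2, h3, h4⟩)
      · exact ⟨hlam.trans h1, h2, h3⟩
      · exact ⟨h1, h2, h3⟩
  have hdisjL : ∀ lam, Disjoint (preisachTriangle β₁ α₁) (SL lam) := by
    intro lam
    rw [Set.disjoint_left]
    rintro p ⟨h1, h2, h3⟩ ⟨g1, g2, g3, g4⟩
    exact absurd h1 (not_le.mpr g4)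
  set G : ℝ → ℝ := fun lam => ∫ p in preisachTriangle lam α₁, ν p with hG
  have hGeq : ∀ lam, lam ≤ β₁ → G lam = c + ∫ p in SL lam, ν p := by
    intro lam hlam
    rw [hG]
    simp only
    rw [hsplitL lam hlam,
      setIntegral_union (hdisjL lam) (hSLm lam) (hIntT β₁ α₁) (hSLint lam)]
  have hOpenL : ∀ lam : ℝ,
      {p : ℝ × ℝ | lam < p.2 ∧ p.2 < β₁ ∧ p.2 < p.1 ∧ p.1 < α₁} ⊆ SL lam := by
    rintro lam p ⟨h1, h2, h3, h4⟩
    exact ⟨h1.le, h3.le, h4.le, h2⟩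
  have hdivLow' : Filter.Tendsto
      (fun lam : ℝ => ∫ p in {p : ℝ × ℝ |
          lam < p.2 ∧ p.2 < β₁ ∧ p.2 < p.1 ∧ p.1 < α₁}, -ν p)
      Filter.atBot Filter.atTop := by
    simpa only [hν, neg_mul] using hdivLow
  have hGbound : ∀ lam, lam ≤ β₁ →
      G lam ≤ c - (∫ p in {p : ℝ × ℝ |
          lam < p.2 ∧ p.2 < β₁ ∧ p.2 < p.1 ∧ p.1 < α₁}, -ν p) := by
    intro lam hlam
    rw [hGeq lam hlam]
    have h1 : (∫ p in {p : ℝ × ℝ | lam < p.2 ∧ p.2 < β₁ ∧ p.2 < p.1 ∧ p.1 < α₁}, -ν p)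
        ≤ ∫ p in SL lam, -ν p := by
      refine setIntegral_mono_set (hSLint lam).neg ?_ ?_
      · filter_upwards [ae_restrict_mem (hSLm lam)] with p hp
        exact hSLneg lam p hp
      · exact HasSubset.Subset.eventuallyLE (hOpenL lam)
    rw [integral_neg, integral_neg] at h1
    rw [integral_neg]
    linarith
  rcases le_or_gt c 0 with hcase | hcase
  · -- use the upper side
    obtain ⟨Λ, hΛ1, hΛ2⟩ :=
      ((hdivUp.eventually_ge_atTop (-c)).and (Filter.eventually_ge_atTop α₁)).exists
    have hβΛ : β₁ ≤ Λ := hP.le.trans hΛ2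
    -- bound on box
    obtain ⟨M, hM⟩ := aux_bound_on_compact μ hlocbdd
      (isCompact_Icc.prod isCompact_Icc :
        IsCompact (Set.Icc β₁ Λ ×ˢ Set.Icc β₁ Λ))
    have hM0 : 0 ≤ M := (abs_nonneg _).trans
      (hM (β₁, β₁) ⟨⟨le_refl _, hβΛ⟩, ⟨le_refl _, hβΛ⟩⟩)
    set C : ℝ := M * (Λ - β₁) with hC
    have hC0 : 0 ≤ C := mul_nonneg hM0 (by linarith)
    have hCb : ∀ p ∈ Set.Icc β₁ Λ ×ˢ Set.Icc β₁ Λ, |ν p| ≤ C := by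
      rintro p ⟨⟨h1, h2⟩, ⟨h3, h4⟩⟩
      rw [hν]
      simp only
      rw [abs_mul]
      apply mul_le_mul (hM p ⟨⟨h1, h2⟩, ⟨h3, h4⟩⟩) _ (abs_nonneg _) hM0
      rw [abs_le]; constructor <;> linarith
    set L : ℝ := C * (Λ - β₁) with hL
    have hcont : ContinuousOn F (Set.Icc α₁ Λ) := by
      apply aux_continuousOn_of_lip (L := L)
      rintro x ⟨hx1, hx2⟩ y ⟨hy1, hy2⟩ hxy
      have hTsub : preisachTriangle β₁ x ⊆ preisachTriangle β₁ y := by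
        rintro p ⟨h1, h2, h3⟩; exact ⟨h1, h2, h3.trans hxy⟩
      have hdiff : (∫ p in preisachTriangle β₁ y \ preisachTriangle β₁ x, ν p)
          = F y - F x :=
        integral_diff (aux_measurable_triangle β₁ x) (hIntT β₁ y) hTsub
      have hDsub : preisachTriangle β₁ y \ preisachTriangle β₁ x
          ⊆ Set.Icc x y ×ˢ Set.Icc β₁ y := by
        rintro p ⟨⟨h1, h2, h3⟩, hn⟩
        have hx' : ¬ p.1 ≤ x := fun h => hn ⟨h1, h2, h⟩
        exact ⟨⟨(not_le.mp hx').le, h3⟩, ⟨h1, h2.trans h3⟩⟩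
      have hDbig : preisachTriangle β₁ y \ preisachTriangle β₁ x
          ⊆ Set.Icc β₁ Λ ×ˢ Set.Icc β₁ Λ := by
        rintro p ⟨⟨h1, h2, h3⟩, -⟩
        exact ⟨⟨h1.trans h2, h3.trans hy2⟩, ⟨h1, (h2.trans h3).trans hy2⟩⟩
      have hb1 : |∫ p in preisachTriangle β₁ y \ preisachTriangle β₁ x, ν p|
          ≤ C * ((y - x) * (y - β₁)) :=
        aux_abs_setIntegral_le hνm hxy (by linarith : β₁ ≤ y) hDsub hC0
          (fun p hp => hCb p (hDbig hp))
      rw [hdiff] at hb1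
      refine hb1.trans ?_
      have hyx : 0 ≤ y - x := by linarith
      have h2 : (y - β₁) ≤ (Λ - β₁) := by linarith
      calc C * ((y - x) * (y - β₁)) = (C * (y - β₁)) * (y - x) := by ring
        _ ≤ (C * (Λ - β₁)) * (y - x) :=
            mul_le_mul_of_nonneg_right (mul_le_mul_of_nonneg_left h2 hC0) hyx
        _ = L * (y - x) := by rw [hL]
    have hFα : F α₁ = c := rfl
    have hFΛ : 0 ≤ F Λ := by
      have := hFbound Λ hΛ2
      linarith
    have h0mem : (0 : ℝ) ∈ Set.Icc (F α₁) (F Λ) := by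
      rw [hFα]; exact ⟨hcase, hFΛ⟩
    obtain ⟨lam, hlam, hFlam⟩ := intermediate_value_Icc hΛ2 hcont h0mem
    exact ⟨β₁, lam, le_refl _, hlam.1, Or.inl rfl, hFlam⟩
  · -- use the lower side
    obtain ⟨Λ, hΛ1, hΛ2⟩ :=
      ((hdivLow'.eventually_ge_atTop c).and (Filter.eventually_le_atBot β₁)).exists
    have hΛα : Λ ≤ α₁ := hΛ2.trans hP.le
    obtain ⟨M, hM⟩ := aux_bound_on_compact μ hlocbdd
      (isCompact_Icc.prod isCompact_Icc :
        IsCompact (Set.Icc Λ α₁ ×ˢ Set.Icc Λ α₁))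
    have hM0 : 0 ≤ M := (abs_nonneg _).trans
      (hM (Λ, Λ) ⟨⟨le_refl _, hΛα⟩, ⟨le_refl _, hΛα⟩⟩)
    set C : ℝ := M * (α₁ - Λ) with hC
    have hC0 : 0 ≤ C := mul_nonneg hM0 (by linarith)
    have hCb : ∀ p ∈ Set.Icc Λ α₁ ×ˢ Set.Icc Λ α₁, |ν p| ≤ C := by
      rintro p ⟨⟨h1, h2⟩, ⟨h3, h4⟩⟩
      rw [hν]
      simp only
      rw [abs_mul]
      apply mul_le_mul (hM p ⟨⟨h1, h2⟩, ⟨h3, h4⟩⟩) _ (abs_nonneg _) hM0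
      rw [abs_le]; constructor <;> linarith
    set L : ℝ := C * (α₁ - Λ) with hL
    have hcont : ContinuousOn G (Set.Icc Λ β₁) := by
      apply aux_continuousOn_of_lip (L := L)
      rintro x ⟨hx1, hx2⟩ y ⟨hy1, hy2⟩ hxy
      have hTsub : preisachTriangle y α₁ ⊆ preisachTriangle x α₁ := by
        rintro p ⟨h1, h2, h3⟩; exact ⟨hxy.trans h1, h2, h3⟩
      have hdiff : (∫ p in preisachTriangle x α₁ \ preisachTriangle y α₁, ν p)
          = G x - G y :=
        integral_diff (aux_measurable_triangle y α₁) (hIntT x α₁) hTsub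
      have hDsub : preisachTriangle x α₁ \ preisachTriangle y α₁
          ⊆ Set.Icc x α₁ ×ˢ Set.Icc x y := by
        rintro p ⟨⟨h1, h2, h3⟩, hn⟩
        have hy' : ¬ y ≤ p.2 := fun h => hn ⟨h, h2, h3⟩
        exact ⟨⟨h1.trans h2, h3⟩, ⟨h1, (not_le.mp hy').le⟩⟩
      have hDbig : preisachTriangle x α₁ \ preisachTriangle y α₁
          ⊆ Set.Icc Λ α₁ ×ˢ Set.Icc Λ α₁ := by
        rintro p ⟨⟨h1, h2, h3⟩, -⟩
        exact ⟨⟨hx1.trans (h1.trans h2), h3⟩, ⟨hx1.trans h1, h2.trans h3⟩⟩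
      have hb1 : |∫ p in preisachTriangle x α₁ \ preisachTriangle y α₁, ν p|
          ≤ C * ((α₁ - x) * (y - x)) :=
        aux_abs_setIntegral_le hνm (by linarith : x ≤ α₁) hxy hDsub hC0
          (fun p hp => hCb p (hDbig hp))
      rw [hdiff] at hb1
      rw [abs_sub_comm] at hb1
      refine hb1.trans ?_
      have hyx : 0 ≤ y - x := by linarith
      have h2 : (α₁ - x) ≤ (α₁ - Λ) := by linarith
      calc C * ((α₁ - x) * (y - x)) = (C * (α₁ - x)) * (y - x) := by ring
        _ ≤ (C * (α₁ - Λ)) * (y - x) :=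
            mul_le_mul_of_nonneg_right (mul_le_mul_of_nonneg_left h2 hC0) hyx
        _ = L * (y - x) := by rw [hL]
    have hGβ : G β₁ = c := rfl
    have hGΛ : G Λ ≤ 0 := by
      have := hGbound Λ hΛ2
      linarith
    have h0mem : (0 : ℝ) ∈ Set.Icc (G Λ) (G β₁) := by
      rw [hGβ]; exact ⟨hGΛ, hcase.le⟩
    obtain ⟨lam, hlam, hGlam⟩ := intermediate_value_Icc hΛ2 hcont h0mem
    exact ⟨lam, α₁, hlam.2, le_refl _, Or.inr rfl, hGlam⟩
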